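/- Coalescing can be redundantly pushed into either argument of the pointwise monus: if K is an m-semiring, then for all temporal K-elements k and k', coal(k −_P k') = coal(coal(k) −_P k') and coal(k −_P k') = coal(k −_P coal(k')). -/
import Mathlib


open scoped Classical

namespace TemporalK

variable {K : Type*}

/-- An interval over the time domain `{0, ..., N-1}`: a pair `(b, e)` with `b < e ≤ N`. -/
abbrev TInterval (N : ℕ) := {I : Fin (N + 1) × Fin (N + 1) // I.1 < I.2}

/-- A temporal `K`-element: a function assigning to each interval an element of `K`. -/
abbrev TempEl (N : ℕ) (K : Type*) := TInterval N → K

/-- The interval `I = (b, e)` contains the time point `T` iff `b ≤ T < e`. -/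
def Contains {N : ℕ} (I : TInterval N) (T : ℕ) : Prop :=
  (I.val.1 : ℕ) ≤ T ∧ T < (I.val.2 : ℕ)

/-- The timeslice of `𝒯` at time point `T`: the sum of `𝒯 I` over all intervals `I`
containing `T`. -/
noncomputable def slice {N : ℕ} [CommSemiring K] (𝒯 : TempEl N K) (T : ℕ) : K :=
  ∑ I ∈ Finset.univ.filter (fun I : TInterval N => Contains I T), 𝒯 I

/-- `T` is an (annotation) changepoint of `𝒯` iff `T = 0` or the timeslices at `T - 1`
and `T` differ. -/
def Changepoint {N : ℕ} [CommSemiring K] (𝒯 : TempEl N K) (T : ℕ) : Prop :=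
  T = 0 ∨ slice 𝒯 (T - 1) ≠ slice 𝒯 T

/-- `I = (b, e)` is a changepoint interval of `𝒯` iff `b` is a changepoint, `e` is a
changepoint or equals `N`, and no time point strictly between `b` and `e` is a changepoint. -/
def CPInterval {N : ℕ} [CommSemiring K] (𝒯 : TempEl N K) (I : TInterval N) : Prop :=
  Changepoint 𝒯 (I.val.1 : ℕ) ∧
    (Changepoint 𝒯 (I.val.2 : ℕ) ∨ (I.val.2 : ℕ) = N) ∧
    ∀ T : ℕ, (I.val.1 : ℕ) < T → T < (I.val.2 : ℕ) → ¬ Changepoint 𝒯 T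

/-- `K`-coalescing: maps changepoint intervals `(b, e)` to the timeslice at `b` and all
other intervals to `0`. -/
noncomputable def coal {N : ℕ} [CommSemiring K] (𝒯 : TempEl N K) : TempEl N K :=
  fun I => if CPInterval 𝒯 I then slice 𝒯 (I.val.1 : ℕ) else 0

/-- Snapshot equivalence: equal timeslices at every time point. -/
def SnapEq {N : ℕ} [CommSemiring K] (k k' : TempEl N K) : Prop :=
  ∀ T : ℕ, T < N → slice k T = slice k' T

/-- A temporal `K`-element is coalesced iff it is the `K`-coalescing of some
temporal `K`-element. -/
def Coalesced {N : ℕ} [CommSemiring K] (k : TempEl N K) : Prop :=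
  ∃ 𝒯 : TempEl N K, k = coal 𝒯

/-- Pointwise addition of temporal `K`-elements. -/
def padd {N : ℕ} [CommSemiring K] (k k' : TempEl N K) : TempEl N K :=
  fun I => k I + k' I

/-- Pointwise multiplication of temporal `K`-elements:
`(k ·_P k')(I) = Σ k(I')·k'(I'')` over all pairs `(I', I'')` whose intersection is
nonempty and equals `I`. -/
noncomputable def pmul {N : ℕ} [CommSemiring K] (k k' : TempEl N K) : TempEl N K :=
  fun I =>
    ∑ p ∈ Finset.univ.filter (fun p : TInterval N × TInterval N =>
        max (p.1.val.1 : ℕ) (p.2.val.1 : ℕ) < min (p.1.val.2 : ℕ) (p.2.val.2 : ℕ) ∧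
        (I.val.1 : ℕ) = max (p.1.val.1 : ℕ) (p.2.val.1 : ℕ) ∧
        (I.val.2 : ℕ) = min (p.1.val.2 : ℕ) (p.2.val.2 : ℕ)),
      k p.1 * k' p.2

/-- Addition of the period semiring: coalesced pointwise addition. -/
noncomputable def tadd {N : ℕ} [CommSemiring K] (k k' : TempEl N K) : TempEl N K :=
  coal (padd k k')

/-- Multiplication of the period semiring: coalesced pointwise multiplication. -/
noncomputable def tmul {N : ℕ} [CommSemiring K] (k k' : TempEl N K) : TempEl N K :=
  coal (pmul k k')

/-- The zero of the period semiring: maps every interval to `0`. -/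
def zeroT (N : ℕ) (K : Type*) [CommSemiring K] : TempEl N K := fun _ => 0

/-- The one of the period semiring: maps the interval `(0, N)` to `1` and every other
interval to `0`. -/
def oneT (N : ℕ) (K : Type*) [CommSemiring K] : TempEl N K :=
  fun I => if (I.val.1 : ℕ) = 0 ∧ (I.val.2 : ℕ) = N then 1 else 0

/-- Encoding of an annotation history `f : time points → K` as a coalesced temporal
`K`-element: coalesce the element assigning `f T` to each singleton interval `(T, T+1)`. -/
noncomputable def enc {N : ℕ} [CommSemiring K] (f : Fin N → K) : TempEl N K :=
  coal (fun I =>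
    if h : (I.val.2 : ℕ) = (I.val.1 : ℕ) + 1 then
      f ⟨(I.val.1 : ℕ), by have := I.val.2.isLt; omega⟩
    else 0)

/-- The natural preorder of the semiring `K`. -/
def nle [CommSemiring K] (a b : K) : Prop := ∃ c, a + c = b

/-- The natural preorder of the period semiring (on coalesced temporal `K`-elements). -/
def tle {N : ℕ} [CommSemiring K] (k k' : TempEl N K) : Prop :=
  ∃ k'' : TempEl N K, Coalesced k'' ∧ tadd k k'' = k'

/-- The pointwise monus: assigns `τ_T(k) −_K τ_T(k')` to each singleton interval
`(T, T+1)` and `0` to every non-singleton interval. -/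
noncomputable def pmonus {N : ℕ} [CommSemiring K] (monus : K → K → K)
    (k k' : TempEl N K) : TempEl N K :=
  fun I =>
    if (I.val.2 : ℕ) = (I.val.1 : ℕ) + 1 then
      monus (slice k (I.val.1 : ℕ)) (slice k' (I.val.1 : ℕ))
    else 0

/-- The monus of the period semiring: coalesced pointwise monus. -/
noncomputable def tmonus {N : ℕ} [CommSemiring K] (monus : K → K → K)
    (k k' : TempEl N K) : TempEl N K :=
  coal (pmonus monus k k')

end TemporalK

open TemporalK


namespace TemporalK
variable {K : Type*}

lemma slice_const {N : ℕ} [CommSemiring K] (𝒯 : TempEl N K) (b T : ℕ) (hbT : b ≤ T)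
    (h : ∀ S, b < S → S ≤ T → ¬ Changepoint 𝒯 S) : slice 𝒯 b = slice 𝒯 T := by
  induction T with
  | zero => have : b = 0 := by omega
            subst this; rfl
  | succ T ih =>
    rcases Nat.lt_or_ge b (T + 1) with h1 | h1
    · have heq := ih (by omega) (fun S hS1 hS2 => h S hS1 (by omega))
      have hcp := h (T + 1) (by omega) le_rfl
      unfold Changepoint at hcp
      push_neg at hcp
      simpa [heq] using hcp.2
    · have : b = T + 1 := by omega
      subst this; rfl

lemma slice_coal {N : ℕ} [CommSemiring K] (𝒯 : TempEl N K) (T : ℕ) (hT : T < N) :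
    slice (coal 𝒯) T = slice 𝒯 T := by
  classical
  set b := Nat.findGreatest (fun S => Changepoint 𝒯 S) T with hbdef
  have hbT : b ≤ T := Nat.findGreatest_le T
  have hb_cp : Changepoint 𝒯 b :=
    Nat.findGreatest_spec (Nat.zero_le T) (Or.inl rfl)
  have hb_max : ∀ S, b < S → S ≤ T → ¬ Changepoint 𝒯 S := fun S h1 h2 =>
    Nat.findGreatest_is_greatest h1 h2
  have hP : ∃ S, T < S ∧ (Changepoint 𝒯 S ∨ S = N) := ⟨N, hT, Or.inr rfl⟩
  set e := Nat.find hP with hedef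
  have he := Nat.find_spec hP
  have heN : e ≤ N := Nat.find_min' hP ⟨hT, Or.inr rfl⟩
  have heT : T < e := he.1
  have he_min : ∀ S, S < e → ¬ (T < S ∧ (Changepoint 𝒯 S ∨ S = N)) :=
    fun S hS => Nat.find_min hP hS
  have hbe : b < e := by omega
  set I₀ : TInterval N := ⟨(⟨b, by omega⟩, ⟨e, by omega⟩), by
    simp only [Fin.mk_lt_mk]; exact hbe⟩ with hI₀def
  have hno : ∀ S : ℕ, b < S → S < e → ¬ Changepoint 𝒯 S := by
    intro S h1 h2
    rcases Nat.lt_or_ge T S with h3 | h3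
    · intro hcp
      exact he_min S h2 ⟨h3, Or.inl hcp⟩
    · exact hb_max S h1 h3
  have hI₀cp : CPInterval 𝒯 I₀ := ⟨hb_cp, he.2, hno⟩
  have hI₀c : Contains I₀ T := ⟨hbT, heT⟩
  have huniq : ∀ J : TInterval N, CPInterval 𝒯 J → Contains J T → J = I₀ := by
    intro J hJcp hJc
    have hJ2N : (J.val.2 : ℕ) ≤ N := by have := J.val.2.isLt; omega
    have hb' : (J.val.1 : ℕ) = b := by
      by_contra hne
      rcases Nat.lt_or_ge (J.val.1 : ℕ) b with h1 | h1
      · exact hJcp.2.2 b h1 (by have := hJc.2; omega) hb_cp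
      · have h2 : b < (J.val.1 : ℕ) := by omega
        exact hb_max _ h2 hJc.1 hJcp.1
    have he' : (J.val.2 : ℕ) = e := by
      have hle : e ≤ (J.val.2 : ℕ) := Nat.find_min' hP ⟨hJc.2, hJcp.2.1⟩
      by_contra hne
      have h2 : e < (J.val.2 : ℕ) := by omega
      rcases he.2 with hcp | hN
      · exact hJcp.2.2 e (by omega) h2 hcp
      · omega
    apply Subtype.ext
    apply Prod.ext <;> apply Fin.ext <;> simp [hI₀def, hb', he']
  have hset : Finset.univ.filter
      (fun I : TInterval N => Contains I T ∧ CPInterval 𝒯 I) = {I₀} := by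
    rw [Finset.eq_singleton_iff_unique_mem]
    constructor
    · simp [hI₀cp, hI₀c]
    · intro J hJ
      simp only [Finset.mem_filter, Finset.mem_univ, true_and] at hJ
      exact huniq J hJ.2 hJ.1
  calc slice (coal 𝒯) T
      = ∑ I ∈ Finset.univ.filter
          (fun I : TInterval N => Contains I T ∧ CPInterval 𝒯 I),
          slice 𝒯 (I.val.1 : ℕ) := by
        rw [slice]
        have hcoal : ∀ I : TInterval N,
            coal 𝒯 I = if CPInterval 𝒯 I then slice 𝒯 (I.val.1 : ℕ) else 0 :=
          fun I => rfl
        simp_rw [hcoal]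
        rw [← Finset.sum_filter, Finset.filter_filter]
    _ = slice 𝒯 b := by rw [hset, Finset.sum_singleton]
    _ = slice 𝒯 T := slice_const 𝒯 b T hbT hb_max
end TemporalK

theorem coal_push_pmonus {N : ℕ} (hN : 1 ≤ N) {K : Type*} [CommSemiring K]
    (hanti : ∀ a b : K, nle a b → nle b a → a = b)
    (monus : K → K → K)
    (hmem : ∀ a b : K, nle a (b + monus a b))
    (hleast : ∀ a b c : K, nle a (b + c) → nle (monus a b) c)
    (k k' : TempEl N K) :
    coal (pmonus monus k k') = coal (pmonus monus (coal k) k') ∧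
    coal (pmonus monus k k') = coal (pmonus monus k (coal k')) := by
  have key : ∀ m : TempEl N K, (∀ T : ℕ, T < N → slice m T = slice (coal m) T) →
      ∀ m' : TempEl N K, pmonus monus m m' = pmonus monus (coal m) m' := by
    intro m hm m'
    funext I
    unfold pmonus
    split_ifs with h
    · have hlt : ((I.val.1 : Fin (N+1)) : ℕ) < N := by
        have h2 := I.val.2.isLt
        omega
      rw [hm _ hlt]
    · rfl
  have key' : ∀ m m' : TempEl N K, (∀ T : ℕ, T < N → slice m' T = slice (coal m') T) →
      pmonus monus m m' = pmonus monus m (coal m') := by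
    intro m m' hm
    funext I
    unfold pmonus
    split_ifs with h
    · have hlt : ((I.val.1 : Fin (N+1)) : ℕ) < N := by
        have h2 := I.val.2.isLt
        omega
      rw [hm _ hlt]
    · rfl
  constructor
  · rw [← key k (fun T hT => (slice_coal k T hT).symm) k']
  · rw [← key' k k' (fun T hT => (slice_coal k' T hT).symm)]
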